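/- (Equivalence of reformulation) Assume there exists x* with F(x*) = 0, and that F(ℝ^p) ∩ Ker(E_{S∼D_y}[H_S(y)]) = {0} for all y. Then for every y, the set of global minimizers of f_y(x) = (1/2)‖F(x)‖²_{E[H_S(y)]} is exactly {x : F(x) = 0}. -/

import Mathlib

open Matrix

/-- equivalence of the reformulation.  If there exists `x*` with `F(x*) = 0`
and `F(ℝ^p) ∩ Ker(E[H_S(y)]) = {0}` for all `y`, then for every `y` the set of global
minimizers of `f_y(x) = (1/2)‖F(x)‖²_{E[H_S(y)]}` is exactly `{x : F(x) = 0}`. -/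
theorem reformulation_equivalence {p m : ℕ}
    (F : (Fin p → ℝ) → (Fin m → ℝ))
    (EH : (Fin p → ℝ) → Matrix (Fin m) (Fin m) ℝ)
    (hEH : ∀ y, (EH y).PosSemidef)
    (hex : ∃ xstar, F xstar = 0)
    (hker : ∀ (y : Fin p → ℝ) (v : Fin m → ℝ), (∃ z, F z = v) → EH y *ᵥ v = 0 → v = 0) :
    ∀ y : Fin p → ℝ,
      {x : Fin p → ℝ | ∀ z, (1 / 2 : ℝ) * (F x ⬝ᵥ (EH y *ᵥ F x))
          ≤ (1 / 2 : ℝ) * (F z ⬝ᵥ (EH y *ᵥ F z))}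
        = {x : Fin p → ℝ | F x = 0} := by
  intro y
  obtain ⟨xstar, hxstar⟩ := hex
  ext x
  simp only [Set.mem_setOf_eq]
  constructor
  · intro hmin
    have h1 := hmin xstar
    rw [hxstar] at h1
    simp only [Matrix.mulVec_zero, dotProduct_zero, mul_zero] at h1
    have h2 : 0 ≤ F x ⬝ᵥ (EH y *ᵥ F x) := (hEH y).dotProduct_mulVec_nonneg (F x)
    have h3 : F x ⬝ᵥ (EH y *ᵥ F x) = 0 := by nlinarith
    have h4 : star (F x) ⬝ᵥ (EH y *ᵥ F x) = 0 := by simpa using h3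
    have h5 := ((hEH y).dotProduct_mulVec_zero_iff (F x)).mp h4
    exact hker y (F x) ⟨x, rfl⟩ h5
  · intro hx z
    rw [hx]
    simp only [Matrix.mulVec_zero, dotProduct_zero, mul_zero]
    have : (0:ℝ) ≤ F z ⬝ᵥ (EH y *ᵥ F z) := (hEH y).dotProduct_mulVec_nonneg (F z)
    nlinarith
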